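/- arXiv:2604.11505 — 2 statements merged into one kernel-verified Lean document; each statement's English description precedes it below -/
import Mathlib

section
/- Let n, s be positive integers with n ≥ 2s + 5, s ≥ 5, and t = 3. If G is a subgraph of K_3 ∨ (K_{2s−5} ∪ K_3 ∪ complement(K_{n−2s−1})), then e(G) ≤ 3n + 2s² − 11s + 12, and this quantity is strictly less than max{ C(n,2) − C(n−s+1,2) + 5, C(2s−1,2) + n + 1 } when additionally n ≥ 40. -/
open SimpleGraph

/-- `M` is a matching in `G`: a set of edges of `G`, pairwise vertex-disjoint. -/
def IsMatchingOn {V : Type*} (G : SimpleGraph V) (M : Set (Sym2 V)) : Prop :=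
  M ⊆ G.edgeSet ∧ M.Pairwise fun e f => ∀ v, v ∈ e → v ∉ f

/-- The matching number of `G`. -/
noncomputable def matchNum {V : Type*} (G : SimpleGraph V) : ℕ :=
  sSup {k | ∃ M : Finset (Sym2 V), IsMatchingOn G ↑M ∧ M.card = k}

/-- The graph `K_t ∨ (K_a ∪ complement (K_(n-t-a)))` on vertex set `Fin n`. -/
def joinGraph (t a n : ℕ) : SimpleGraph (Fin n) where
  Adj i j := i ≠ j ∧ ((i : ℕ) < t ∨ (j : ℕ) < t ∨ ((i : ℕ) < t + a ∧ (j : ℕ) < t + a))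
  symm := by constructor; intro i j h; exact ⟨h.1.symm, by tauto⟩
  loopless := by constructor; intro i h; exact h.1 rfl

/-- The graph `K_t ∨ (K_a ∪ K_b ∪ complement (K_(n-t-a-b)))` on `Fin n`. -/
def join2Graph (t a b n : ℕ) : SimpleGraph (Fin n) where
  Adj i j := i ≠ j ∧ ((i : ℕ) < t ∨ (j : ℕ) < t ∨
    ((i : ℕ) < t + a ∧ (j : ℕ) < t + a) ∨
    (t + a ≤ (i : ℕ) ∧ (i : ℕ) < t + a + b ∧ t + a ≤ (j : ℕ) ∧ (j : ℕ) < t + a + b))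
  symm := by constructor; intro i j h; exact ⟨h.1.symm, by tauto⟩
  loopless := by constructor; intro i h; exact h.1 rfl

lemma join2_adj (t a b n : ℕ) (i j : Fin n) : (join2Graph t a b n).Adj i j ↔
    i ≠ j ∧ ((i : ℕ) < t ∨ (j : ℕ) < t ∨
    ((i : ℕ) < t + a ∧ (j : ℕ) < t + a) ∨
    (t + a ≤ (i : ℕ) ∧ (i : ℕ) < t + a + b ∧ t + a ≤ (j : ℕ) ∧ (j : ℕ) < t + a + b)) :=
  Iff.rfl

instance join2Dec (t a b n : ℕ) : DecidableRel (join2Graph t a b n).Adj := fun i j =>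
  decidable_of_iff _ (join2_adj t a b n i j).symm

lemma card_filter_fin_lt (n m : ℕ) (h : m ≤ n) :
    (Finset.univ.filter fun j : Fin n => (j : ℕ) < m).card = m := by
  have he : (Finset.univ.filter fun j : Fin n => (j : ℕ) < m) =
      Finset.attachFin (Finset.range m)
        (fun x hx => (Finset.mem_range.mp hx).trans_le h) := by
    ext j; simp [Finset.mem_attachFin]
  rw [he, Finset.card_attachFin, Finset.card_range]

lemma card_filter_fin_Ico (n lo hi : ℕ) (h : hi ≤ n) :
    (Finset.univ.filter fun j : Fin n => lo ≤ (j : ℕ) ∧ (j : ℕ) < hi).card = hi - lo := by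
  have he : (Finset.univ.filter fun j : Fin n => lo ≤ (j : ℕ) ∧ (j : ℕ) < hi) =
      Finset.attachFin (Finset.Ico lo hi)
        (fun x hx => (Finset.mem_Ico.mp hx).2.trans_le h) := by
    ext j; simp [Finset.mem_attachFin]
  rw [he, Finset.card_attachFin, Nat.card_Ico]

lemma two_mul_choose_two (n : ℕ) : 2 * n.choose 2 = n * (n - 1) := by
  rw [Nat.choose_two_right]
  apply Nat.two_mul_div_two_of_even
  rcases n with _ | m
  · simp
  · simpa [mul_comm] using Nat.even_mul_succ_self m

/-- Any subgraph of `K_3 ∨ (K_(2s−5) ∪ K_3 ∪ complement K_(n−2s−1))` has at most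
`3n + 2s² − 11s + 12` edges, a quantity which is less than
`max{C(n,2) − C(n−s+1,2) + 5, C(2s−1,2) + n + 1}` when additionally `n ≥ 40`. -/
theorem stmt_13 (n s : ℕ) (hs : 5 ≤ s) (hn : 2 * s + 5 ≤ n)
    (G : SimpleGraph (Fin n)) (hG : G ≤ join2Graph 3 (2 * s - 5) 3 n) :
    G.edgeSet.ncard ≤ 3 * n + 2 * s ^ 2 - 11 * s + 12 ∧
    (40 ≤ n → 3 * n + 2 * s ^ 2 - 11 * s + 12 <
      max (Nat.choose n 2 - Nat.choose (n - s + 1) 2 + 5)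
        (Nat.choose (2 * s - 1) 2 + n + 1)) := by
  obtain ⟨u, rfl⟩ : ∃ u, s = u + 5 := ⟨s - 5, by omega⟩
  obtain ⟨w, rfl⟩ : ∃ w, n = w + (2 * u + 15) := ⟨n - (2 * u + 15), by omega⟩
  have hsq : (u + 5) ^ 2 = u * u + 10 * u + 25 := by ring
  rw [hsq]
  have ha : 2 * (u + 5) - 5 = 2 * u + 5 := by omega
  rw [ha] at hG
  constructor
  · -- Part 1: edge bound
    set J := join2Graph 3 (2 * u + 5) 3 (w + (2 * u + 15)) with hJ
    have hmono : G.edgeSet.ncard ≤ J.edgeSet.ncard :=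
      Set.ncard_le_ncard (SimpleGraph.edgeSet_mono hG) (Set.toFinite _)
    have hJcard : J.edgeSet.ncard = J.edgeFinset.card :=
      Set.ncard_eq_toFinset_card' _
    have hdsum := SimpleGraph.sum_degrees_eq_twice_card_edges J
    -- degree bounds
    have hb1 : ∀ v : Fin (w + (2 * u + 15)), (v : ℕ) < 3 → J.degree v ≤ w + 2 * u + 14 := by
      intro v _
      have h := J.degree_lt_card_verts v
      rw [Fintype.card_fin] at h
      omega
    have hb2 : ∀ v : Fin (w + (2 * u + 15)), 3 ≤ (v : ℕ) → (v : ℕ) < 2 * u + 8 → J.degree v ≤ 2 * u + 7 := by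
      intro v hv1 hv2
      have hsub : J.neighborFinset v ⊆
          (Finset.univ.filter fun j : Fin (w + (2 * u + 15)) => (j : ℕ) < 2 * u + 8).erase v := by
        intro j hj
        rw [SimpleGraph.mem_neighborFinset] at hj
        obtain ⟨hne, hd⟩ := (join2_adj _ _ _ _ v j).mp hj
        rw [Finset.mem_erase, Finset.mem_filter]
        exact ⟨hne.symm, Finset.mem_univ _, by omega⟩
      have hmem : v ∈ Finset.univ.filter fun j : Fin (w + (2 * u + 15)) => (j : ℕ) < 2 * u + 8 :=
        Finset.mem_filter.mpr ⟨Finset.mem_univ _, hv2⟩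
      have hc := Finset.card_le_card hsub
      rw [Finset.card_erase_of_mem hmem,
          card_filter_fin_lt (w + (2 * u + 15)) (2 * u + 8) (by omega)] at hc
      have : J.degree v = (J.neighborFinset v).card := rfl
      omega
    have hb3 : ∀ v : Fin (w + (2 * u + 15)), 2 * u + 8 ≤ (v : ℕ) → (v : ℕ) < 2 * u + 11 →
        J.degree v ≤ 5 := by
      intro v hv1 hv2
      have hsub : J.neighborFinset v ⊆
          (Finset.univ.filter fun j : Fin (w + (2 * u + 15)) => (j : ℕ) < 3) ∪
          (Finset.univ.filter fun j : Fin (w + (2 * u + 15)) =>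
            2 * u + 8 ≤ (j : ℕ) ∧ (j : ℕ) < 2 * u + 11).erase v := by
        intro j hj
        rw [SimpleGraph.mem_neighborFinset] at hj
        obtain ⟨hne, hd⟩ := (join2_adj _ _ _ _ v j).mp hj
        rw [Finset.mem_union, Finset.mem_erase, Finset.mem_filter, Finset.mem_filter]
        rcases lt_or_ge (j : ℕ) 3 with h3 | h3
        · exact Or.inl ⟨Finset.mem_univ _, h3⟩
        · exact Or.inr ⟨hne.symm, Finset.mem_univ _, by omega⟩
      have hmem : v ∈ Finset.univ.filter fun j : Fin (w + (2 * u + 15)) =>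
          2 * u + 8 ≤ (j : ℕ) ∧ (j : ℕ) < 2 * u + 11 :=
        Finset.mem_filter.mpr ⟨Finset.mem_univ _, hv1, hv2⟩
      have hc := (Finset.card_le_card hsub).trans (Finset.card_union_le _ _)
      rw [Finset.card_erase_of_mem hmem,
          card_filter_fin_lt (w + (2 * u + 15)) 3 (by omega),
          card_filter_fin_Ico (w + (2 * u + 15)) (2 * u + 8) (2 * u + 11) (by omega)] at hc
      have : J.degree v = (J.neighborFinset v).card := rfl
      omega
    have hb4 : ∀ v : Fin (w + (2 * u + 15)), 2 * u + 11 ≤ (v : ℕ) → J.degree v ≤ 3 := by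
      intro v hv1
      have hsub : J.neighborFinset v ⊆
          (Finset.univ.filter fun j : Fin (w + (2 * u + 15)) => (j : ℕ) < 3) := by
        intro j hj
        rw [SimpleGraph.mem_neighborFinset] at hj
        obtain ⟨hne, hd⟩ := (join2_adj _ _ _ _ v j).mp hj
        rw [Finset.mem_filter]
        exact ⟨Finset.mem_univ _, by omega⟩
      have hc := Finset.card_le_card hsub
      rw [card_filter_fin_lt (w + (2 * u + 15)) 3 (by omega)] at hc
      have : J.degree v = (J.neighborFinset v).card := rfl
      omega
    -- sum of the bounds
    set g0 : ℕ → ℕ := fun i => if i < 3 then w + 2 * u + 14 else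
      if i < 2 * u + 8 then 2 * u + 7 else if i < 2 * u + 11 then 5 else 3 with hg0
    have hle : ∑ v : Fin (w + (2 * u + 15)), J.degree v ≤ ∑ v : Fin (w + (2 * u + 15)), g0 (v : ℕ) := by
      apply Finset.sum_le_sum
      intro v _
      rcases lt_or_ge (v : ℕ) 3 with h1 | h1
      · rw [hg0]; simp only []; rw [if_pos h1]; exact hb1 v h1
      rcases lt_or_ge (v : ℕ) (2 * u + 8) with h2 | h2
      · rw [hg0]; simp only []; rw [if_neg (by omega), if_pos h2]; exact hb2 v h1 h2
      rcases lt_or_ge (v : ℕ) (2 * u + 11) with h3 | h3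
      · rw [hg0]; simp only []; rw [if_neg (by omega), if_neg (by omega), if_pos h3]
        exact hb3 v h2 h3
      · rw [hg0]; simp only []
        rw [if_neg (by omega), if_neg (by omega), if_neg (by omega)]
        exact hb4 v h3
    have hrange : ∑ v : Fin (w + (2 * u + 15)), g0 (v : ℕ) =
        ∑ i ∈ Finset.range (w + (2 * u + 15)), g0 i :=
      Fin.sum_univ_eq_sum_range g0 (w + (2 * u + 15))
    have hsplit : ∑ i ∈ Finset.range (w + (2 * u + 15)), g0 i =
        (∑ i ∈ Finset.Ico 0 3, g0 i) + (∑ i ∈ Finset.Ico 3 (2 * u + 8), g0 i) +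
        (∑ i ∈ Finset.Ico (2 * u + 8) (2 * u + 11), g0 i) +
        (∑ i ∈ Finset.Ico (2 * u + 11) (w + (2 * u + 15)), g0 i) := by
      rw [Finset.range_eq_Ico,
        ← Finset.sum_Ico_consecutive g0 (show 0 ≤ 2 * u + 11 by omega) (show 2 * u + 11 ≤ w + (2 * u + 15) by omega),
        ← Finset.sum_Ico_consecutive g0 (show 0 ≤ 2 * u + 8 by omega) (show 2 * u + 8 ≤ 2 * u + 11 by omega),
        ← Finset.sum_Ico_consecutive g0 (show 0 ≤ 3 by omega) (show 3 ≤ 2 * u + 8 by omega)]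
    have p1 : ∑ i ∈ Finset.Ico 0 3, g0 i = 3 * (w + 2 * u + 14) := by
      rw [Finset.sum_congr rfl (g := fun _ => w + 2 * u + 14) (fun i hi => by
        rw [Finset.mem_Ico] at hi; rw [hg0]; simp only []; rw [if_pos hi.2]),
        Finset.sum_const, Nat.card_Ico, smul_eq_mul]
    have p2 : ∑ i ∈ Finset.Ico 3 (2 * u + 8), g0 i = (2 * u + 5) * (2 * u + 7) := by
      rw [Finset.sum_congr rfl (g := fun _ => 2 * u + 7) (fun i hi => by
        rw [Finset.mem_Ico] at hi; rw [hg0]; simp only []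
        rw [if_neg (by omega), if_pos hi.2]),
        Finset.sum_const, Nat.card_Ico, smul_eq_mul]
      congr 1
    have p3 : ∑ i ∈ Finset.Ico (2 * u + 8) (2 * u + 11), g0 i = 3 * 5 := by
      rw [Finset.sum_congr rfl (g := fun _ => 5) (fun i hi => by
        rw [Finset.mem_Ico] at hi; rw [hg0]; simp only []
        rw [if_neg (by omega), if_neg (by omega), if_pos hi.2]),
        Finset.sum_const, Nat.card_Ico, smul_eq_mul]
      omega
    have p4 : ∑ i ∈ Finset.Ico (2 * u + 11) (w + (2 * u + 15)), g0 i = (w + 4) * 3 := by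
      rw [Finset.sum_congr rfl (g := fun _ => 3) (fun i hi => by
        rw [Finset.mem_Ico] at hi; rw [hg0]; simp only []
        rw [if_neg (by omega), if_neg (by omega), if_neg (by omega)]),
        Finset.sum_const, Nat.card_Ico, smul_eq_mul]
      omega
    have htot : 2 * J.edgeFinset.card ≤
        3 * (w + 2 * u + 14) + (2 * u + 5) * (2 * u + 7) + 3 * 5 + (w + 4) * 3 := by
      rw [← hdsum]
      rw [hrange, hsplit, p1, p2, p3, p4] at hle
      exact hle
    have hprod : (2 * u + 5) * (2 * u + 7) = 4 * (u * u) + 24 * u + 35 := by ring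
    rw [hprod] at htot
    clear hsq hprod
    generalize u * u = q at htot ⊢
    omega
  · intro hn40
    rcases lt_or_ge w (2 * u) with hc | hc
    · -- right component of max wins
      apply lt_of_lt_of_le _ (le_max_right _ _)
      have hB : 2 * ((2 * (u + 5) - 1).choose 2) = 4 * (u * u) + 34 * u + 72 := by
        rw [show 2 * (u + 5) - 1 = 2 * u + 9 from by omega, two_mul_choose_two,
          show 2 * u + 9 - 1 = 2 * u + 8 from by omega]
        ring
      clear hsq
      generalize u * u = q at hB ⊢
      omega
    · -- left component of max wins
      apply lt_of_lt_of_le _ (le_max_left _ _)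
      have h1 : 2 * ((w + (2 * u + 15)).choose 2) =
          w * w + 4 * (u * w) + 29 * w + 4 * (u * u) + 58 * u + 210 := by
        rw [two_mul_choose_two, show w + (2 * u + 15) - 1 = w + 2 * u + 14 from by omega,
          show w + (2 * u + 15) = w + 2 * u + 15 from by omega]
        ring
      have h2 : 2 * ((w + (2 * u + 15) - (u + 5) + 1).choose 2) =
          w * w + 2 * (u * w) + 21 * w + u * u + 21 * u + 110 := by
        rw [show w + (2 * u + 15) - (u + 5) + 1 = w + u + 11 from by omega, two_mul_choose_two,
          show w + u + 11 - 1 = w + u + 10 from by omega]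
        ring
      have hkey : 2 * (u * u) ≤ u * w := by
        have h2u : 2 * u ≤ w := by omega
        calc 2 * (u * u) = u * (2 * u) := by ring
          _ ≤ u * w := Nat.mul_le_mul_left u h2u
      clear hsq
      generalize u * u = q1 at h1 h2 hkey ⊢
      generalize u * w = q2 at h1 h2 hkey ⊢
      generalize w * w = q3 at h1 h2 ⊢
      omega
end

section
/- Let n, s be integers with n ≥ 2s + 5, and let F₂ = K_1 ∨ (K_{2s−1} ∪ complement(K_{n−2s})) be a spanning subgraph of K_n. Color each edge of F₂ with its own distinct color and all remaining edges of K_n with one additional color 0. Then this edge-coloring of K_n uses exactly C(2s−1,2) + n colors and contains no rainbow matching of size s+2 and no monochromatic copy of K_{n−2s−1} ∨ complement(K_{2s+1}). -/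
open SimpleGraph

lemma joinGraph_adj_iff {n s : ℕ} (hs : 1 ≤ s) (i j : Fin n) :
    (joinGraph 1 (2 * s - 1) n).Adj i j ↔
      i ≠ j ∧ ((i : ℕ) = 0 ∨ (j : ℕ) = 0 ∨ ((i : ℕ) < 2 * s ∧ (j : ℕ) < 2 * s)) := by
  show (i ≠ j ∧ _) ↔ _
  constructor <;> rintro ⟨h1, h2⟩ <;> exact ⟨h1, by omega⟩

/-- Cardinality of the filter of small elements of `Fin n`. -/
lemma card_filter_lt {n k : ℕ} (hk : k ≤ n) :
    (Finset.univ.filter fun v : Fin n => (v : ℕ) < k).card = k := by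
  classical
  have h : (Finset.univ.filter fun v : Fin n => (v : ℕ) < k)
      = Finset.univ.map (Fin.castLEEmb hk) := by
    ext v
    simp only [Finset.mem_filter, Finset.mem_univ, true_and, Finset.mem_map]
    constructor
    · intro h
      exact ⟨⟨(v : ℕ), h⟩, by ext; simp⟩
    · rintro ⟨a, rfl⟩
      simpa using a.isLt
  rw [h, Finset.card_map, Finset.card_univ, Fintype.card_fin]

/-- Edge count of the join graph. -/
lemma joinGraph_edge_count {n s : ℕ} (hs : 1 ≤ s) (hn : 2 * s + 5 ≤ n) :
    (joinGraph 1 (2 * s - 1) n).edgeSet.ncard = Nat.choose (2 * s) 2 + (n - 2 * s) := by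
  classical
  set G := joinGraph 1 (2 * s - 1) n with hG
  have h2s : 2 * s ≤ n := by omega
  have z0lt : 0 < n := by omega
  set z0 : Fin n := ⟨0, z0lt⟩ with hz0
  set A : Finset (Sym2 (Fin n)) :=
    ((⊤ : SimpleGraph (Fin (2 * s))).edgeFinset).image (Sym2.map (Fin.castLE h2s)) with hA
  set B : Finset (Sym2 (Fin n)) :=
    ((Finset.univ.filter fun v : Fin n => 2 * s ≤ (v : ℕ)).image fun v => s(z0, v)) with hB
  have hmemA : ∀ i j : Fin n, s(i, j) ∈ A ↔
      i ≠ j ∧ (i : ℕ) < 2 * s ∧ (j : ℕ) < 2 * s := by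
    intro i j
    rw [hA]
    simp only [Finset.mem_image, mem_edgeFinset]
    constructor
    · rintro ⟨e, he, hmap⟩
      induction e with
      | _ a b =>
        simp only [Sym2.map_pair_eq] at hmap
        rw [mem_edgeSet, top_adj] at he
        rcases Sym2.eq_iff.mp hmap with ⟨rfl, rfl⟩ | ⟨rfl, rfl⟩
        · refine ⟨fun h => he (Fin.castLE_injective h2s h), a.isLt, b.isLt⟩
        · refine ⟨fun h => he (Fin.castLE_injective h2s h.symm), b.isLt, a.isLt⟩
    · rintro ⟨hij, hi, hj⟩
      refine ⟨s(⟨(i : ℕ), hi⟩, ⟨(j : ℕ), hj⟩), ?_, ?_⟩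
      · rw [mem_edgeSet, top_adj]
        intro h
        exact hij (by ext; exact congrArg (Fin.val : Fin (2 * s) → ℕ) h)
      · simp only [Sym2.map_pair_eq]
        congr 1 <;> ext <;> simp [Fin.castLE]
  have hmemB : ∀ e : Sym2 (Fin n), e ∈ B ↔
      ∃ v : Fin n, 2 * s ≤ (v : ℕ) ∧ e = s(z0, v) := by
    intro e
    rw [hB]
    simp only [Finset.mem_image, Finset.mem_filter, Finset.mem_univ, true_and]
    constructor
    · rintro ⟨v, hv, rfl⟩; exact ⟨v, hv, rfl⟩
    · rintro ⟨v, hv, rfl⟩; exact ⟨v, hv, rfl⟩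
  have hEdge : G.edgeFinset = A ∪ B := by
    ext e
    induction e with
    | _ i j =>
      rw [mem_edgeFinset, mem_edgeSet, hG, joinGraph_adj_iff hs, Finset.mem_union, hmemA]
      constructor
      · rintro ⟨hij, hcase⟩
        have hij' : (i : ℕ) ≠ (j : ℕ) := fun h => hij (by ext; exact h)
        rcases hcase with hi0 | hj0 | ⟨hi, hj⟩
        · by_cases hj : (j : ℕ) < 2 * s
          · exact Or.inl ⟨hij, by omega, hj⟩
          · refine Or.inr ((hmemB _).mpr ⟨j, by omega, ?_⟩)
            have : i = z0 := by ext; exact hi0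
            rw [this]
        · by_cases hi : (i : ℕ) < 2 * s
          · exact Or.inl ⟨hij, hi, by omega⟩
          · refine Or.inr ((hmemB _).mpr ⟨i, by omega, ?_⟩)
            have : j = z0 := by ext; exact hj0
            rw [this, Sym2.eq_swap]
        · exact Or.inl ⟨hij, hi, hj⟩
      · rintro (⟨hij, hi, hj⟩ | hb)
        · exact ⟨hij, Or.inr (Or.inr ⟨hi, hj⟩)⟩
        · obtain ⟨v, hv, heq⟩ := (hmemB _).mp hb
          rcases Sym2.eq_iff.mp heq with ⟨rfl, rfl⟩ | ⟨rfl, rfl⟩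
          · exact ⟨fun h => by simp [hz0, ← h] at hv; omega, Or.inl rfl⟩
          · exact ⟨fun h => by simp [hz0, h] at hv; omega, Or.inr (Or.inl rfl)⟩
  have hdisj : Disjoint A B := by
    rw [Finset.disjoint_left]
    intro e heA heB
    obtain ⟨v, hv, rfl⟩ := (hmemB _).mp heB
    have := (hmemA z0 v).mp heA
    omega
  have hcardA : A.card = Nat.choose (2 * s) 2 := by
    rw [hA, Finset.card_image_of_injective _ (Sym2.map.injective (Fin.castLE_injective h2s)),
      card_edgeFinset_top_eq_card_choose_two, Fintype.card_fin]
  have hcardB : B.card = n - 2 * s := by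
    rw [hB, Finset.card_image_of_injective]
    · have h1 := Finset.card_filter_add_card_filter_not
        (s := (Finset.univ : Finset (Fin n))) (fun v : Fin n => (v : ℕ) < 2 * s)
      rw [card_filter_lt h2s, Finset.card_univ, Fintype.card_fin] at h1
      have h2 : (Finset.univ.filter fun v : Fin n => ¬ (v : ℕ) < 2 * s)
          = (Finset.univ.filter fun v : Fin n => 2 * s ≤ (v : ℕ)) := by
        apply Finset.filter_congr; intro v _; simp [not_lt]
      rw [← h2]
      omega
    · intro u v h
      rcases Sym2.eq_iff.mp h with ⟨-, h2⟩ | ⟨h1, h2⟩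
      · exact h2
      · rw [← h1, h2]
  have : G.edgeFinset.card = Nat.choose (2 * s) 2 + (n - 2 * s) := by
    rw [hEdge, Finset.card_union_of_disjoint hdisj, hcardA, hcardB]
  rw [Set.ncard_eq_toFinset_card']
  exact this

/-- Tightness construction: coloring the edges of `F₂ = K_1 ∨ (K_(2s−1) ∪ complement
K_(n−2s))` with distinct nonzero colors and all other edges of `K_n` with color `0`
yields exactly `C(2s−1,2) + n` colors, no rainbow matching of size `s+2`, and no
monochromatic `K_(n−2s−1) ∨ complement (K_(2s+1))`. -/
theorem stmt_19 (n s : ℕ) (hs : 1 ≤ s) (hn : 2 * s + 5 ≤ n)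
    (c : Sym2 (Fin n) → ℕ)
    (hinj : Set.InjOn c (joinGraph 1 (2 * s - 1) n).edgeSet)
    (hne : ∀ e ∈ (joinGraph 1 (2 * s - 1) n).edgeSet, c e ≠ 0)
    (h0 : ∀ e : Sym2 (Fin n), ¬ e.IsDiag → e ∉ (joinGraph 1 (2 * s - 1) n).edgeSet → c e = 0) :
    (c '' {e : Sym2 (Fin n) | ¬ e.IsDiag}).ncard = Nat.choose (2 * s - 1) 2 + n ∧
    (¬ ∃ M : Finset (Sym2 (Fin n)),
      IsMatchingOn (⊤ : SimpleGraph (Fin n)) ↑M ∧ M.card = s + 2 ∧ Set.InjOn c ↑M) ∧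
    ¬ ∃ (k : ℕ) (S T : Finset (Fin n)), Disjoint S T ∧
      S.card = n - 2 * s - 1 ∧ T.card = 2 * s + 1 ∧
      (∀ u ∈ S, ∀ v ∈ S, u ≠ v → c s(u, v) = k) ∧
      (∀ u ∈ S, ∀ v ∈ T, c s(u, v) = k) := by
  classical
  set G := joinGraph 1 (2 * s - 1) n with hG
  have hadj : ∀ i j : Fin n, G.Adj i j ↔
      i ≠ j ∧ ((i : ℕ) = 0 ∨ (j : ℕ) = 0 ∨ ((i : ℕ) < 2 * s ∧ (j : ℕ) < 2 * s)) :=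
    fun i j => joinGraph_adj_iff hs i j
  set z0 : Fin n := ⟨0, by omega⟩ with hz0
  refine ⟨?_, ?_, ?_⟩
  · -- color count
    have himg : c '' {e : Sym2 (Fin n) | ¬ e.IsDiag} = insert 0 (c '' G.edgeSet) := by
      ext x
      constructor
      · rintro ⟨e, he, rfl⟩
        by_cases hE : e ∈ G.edgeSet
        · exact Set.mem_insert_of_mem _ ⟨e, hE, rfl⟩
        · rw [h0 e he hE]; exact Set.mem_insert _ _
      · rintro (rfl | ⟨e, he, rfl⟩)
        · set v1 : Fin n := ⟨2 * s, by omega⟩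
          set v2 : Fin n := ⟨2 * s + 1, by omega⟩
          have hdiag : ¬ (s(v1, v2) : Sym2 (Fin n)).IsDiag := by
            rw [Sym2.isDiag_iff_proj_eq]
            intro h
            have := congrArg Fin.val h
            simp [v1, v2] at this
          have hnot : s(v1, v2) ∉ G.edgeSet := by
            rw [mem_edgeSet, hadj]
            rintro ⟨-, h⟩
            simp [v1, v2] at h
            omega
          exact ⟨s(v1, v2), hdiag, h0 _ hdiag hnot⟩
        · have : ¬ e.IsDiag := by
            induction e with
            | _ i j =>
              rw [mem_edgeSet] at he
              rw [Sym2.isDiag_iff_proj_eq]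
              exact fun h => ((hadj i j).mp he).1 h
          exact ⟨e, this, rfl⟩
    rw [himg]
    have h0not : (0 : ℕ) ∉ c '' G.edgeSet := by
      rintro ⟨e, he, h⟩; exact hne e he h
    rw [Set.ncard_insert_of_notMem h0not (Set.toFinite _),
      Set.ncard_image_of_injOn hinj, joinGraph_edge_count hs hn]
    have hpascal : Nat.choose (2 * s) 2 = Nat.choose (2 * s - 1) 1 + Nat.choose (2 * s - 1) 2 := by
      have : 2 * s = (2 * s - 1) + 1 := by omega
      rw [this]
      exact Nat.choose_succ_succ (2 * s - 1) 1
    rw [Nat.choose_one_right] at hpascal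
    omega
  · -- no rainbow matching of size s + 2
    rintro ⟨M, ⟨hMsub, hMpair⟩, hMcard, hMinj⟩
    have h2s : 2 * s ≤ n := by omega
    set M1 := M.filter (fun e => e ∈ G.edgeSet) with hM1
    set M0 := M.filter (fun e => ¬ e ∈ G.edgeSet) with hM0
    have hnd : ∀ e ∈ M, ¬ e.IsDiag := by
      intro e he
      have := hMsub (Finset.mem_coe.mpr he)
      rw [edgeSet_top] at this; simpa using this
    have hM0card : M0.card ≤ 1 := by
      rw [Finset.card_le_one]
      intro a ha b hb
      rw [hM0, Finset.mem_filter] at ha hb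
      have ha0 : c a = 0 := h0 a (hnd a ha.1) ha.2
      have hb0 : c b = 0 := h0 b (hnd b hb.1) hb.2
      exact hMinj (Finset.mem_coe.mpr ha.1) (Finset.mem_coe.mpr hb.1) (ha0.trans hb0.symm)
    have hMsplit : M1.card + M0.card = M.card := by
      rw [hM1, hM0]
      exact Finset.card_filter_add_card_filter_not _
    have hM1card : s + 1 ≤ M1.card := by omega
    set V : Sym2 (Fin n) → Finset (Fin n) :=
      fun e => Finset.univ.filter (fun v => v ∈ e ∧ (v : ℕ) < 2 * s) with hV
    have hVsub : ∀ e, V e ⊆ Finset.univ.filter (fun v : Fin n => (v : ℕ) < 2 * s) := by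
      intro e v hv
      rw [hV, Finset.mem_filter] at hv
      rw [Finset.mem_filter]
      exact ⟨hv.1, hv.2.2⟩
    have hM1M : ∀ e ∈ M1, e ∈ M := fun e he => Finset.mem_of_mem_filter e he
    have hVdisj : ∀ e ∈ M1, ∀ f ∈ M1, e ≠ f → Disjoint (V e) (V f) := by
      intro e he f hf hef
      rw [Finset.disjoint_left]
      intro v hve hvf
      rw [hV, Finset.mem_filter] at hve hvf
      exact hMpair (Finset.mem_coe.mpr (hM1M e he)) (Finset.mem_coe.mpr (hM1M f hf)) hef
        v hve.2.1 hvf.2.1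
    have hbU : (M1.biUnion V).card = ∑ e ∈ M1, (V e).card := Finset.card_biUnion hVdisj
    have hbU2 : (M1.biUnion V).card ≤ 2 * s := by
      calc (M1.biUnion V).card
          ≤ (Finset.univ.filter (fun v : Fin n => (v : ℕ) < 2 * s)).card :=
            Finset.card_le_card (by
              intro v hv
              obtain ⟨e, he, hve⟩ := Finset.mem_biUnion.mp hv
              exact hVsub e hve)
        _ = 2 * s := card_filter_lt h2s
    set Z := M1.filter (fun e => z0 ∈ e) with hZ
    have hZcard : Z.card ≤ 1 := by
      rw [Finset.card_le_one]
      intro a ha b hb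
      rw [hZ, Finset.mem_filter] at ha hb
      by_contra hab
      exact hMpair (Finset.mem_coe.mpr (hM1M a ha.1)) (Finset.mem_coe.mpr (hM1M b hb.1)) hab
        z0 ha.2 hb.2
    have hZsum : Z.card ≤ ∑ e ∈ Z, (V e).card := by
      have : ∀ e ∈ Z, 1 ≤ (V e).card := by
        intro e he
        rw [hZ, Finset.mem_filter] at he
        apply Finset.card_pos.mpr
        exact ⟨z0, by rw [hV, Finset.mem_filter]; exact ⟨Finset.mem_univ _, he.2, by simp [hz0]; omega⟩⟩
      calc Z.card = ∑ _e ∈ Z, 1 := by rw [Finset.sum_const, smul_eq_mul, mul_one]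
        _ ≤ ∑ e ∈ Z, (V e).card := Finset.sum_le_sum this
    have hV2 : ∀ e, e ∈ G.edgeSet → z0 ∉ e → (V e).card = 2 := by
      intro e
      induction e with
      | _ i j =>
        intro heE hez0
        rw [mem_edgeSet, hadj] at heE
        obtain ⟨hij, hcase⟩ := heE
        rw [Sym2.mem_iff] at hez0
        push_neg at hez0
        have hi0 : (i : ℕ) ≠ 0 := fun h => hez0.1 (by ext; simp [hz0, h])
        have hj0 : (j : ℕ) ≠ 0 := fun h => hez0.2 (by ext; simp [hz0, h])
        have hi : (i : ℕ) < 2 * s := by omega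
        have hj : (j : ℕ) < 2 * s := by omega
        have hVeq : V s(i, j) = {i, j} := by
          ext v
          rw [hV, Finset.mem_filter, Sym2.mem_iff, Finset.mem_insert, Finset.mem_singleton]
          constructor
          · rintro ⟨-, hvij, -⟩; exact hvij
          · rintro (rfl | rfl)
            · exact ⟨Finset.mem_univ _, Or.inl rfl, hi⟩
            · exact ⟨Finset.mem_univ _, Or.inr rfl, hj⟩
        rw [hVeq, Finset.card_pair hij]
    have hNZsum : ∑ e ∈ M1.filter (fun e => ¬ z0 ∈ e), (V e).card
        = (M1.filter (fun e => ¬ z0 ∈ e)).card * 2 := by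
      apply Finset.sum_const_nat
      intro e he
      rw [Finset.mem_filter] at he
      exact hV2 e (Finset.mem_filter.mp he.1).2 he.2
    have hsplitsum : ∑ e ∈ Z, (V e).card + ∑ e ∈ M1.filter (fun e => ¬ z0 ∈ e), (V e).card
        = ∑ e ∈ M1, (V e).card := by
      rw [hZ]
      exact Finset.sum_filter_add_sum_filter_not M1 _ _
    have hsplitcard : Z.card + (M1.filter (fun e => ¬ z0 ∈ e)).card = M1.card := by
      rw [hZ]
      exact Finset.card_filter_add_card_filter_not _
    omega
  · -- no monochromatic join
    rintro ⟨k, S, T, hST, hScard, hTcard, hSS, hSTc⟩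
    have hS2 : 4 ≤ S.card := by omega
    by_cases hk : k = 0
    · subst hk
      have huniv : S ∪ T = Finset.univ := by
        apply Finset.eq_univ_of_card
        rw [Finset.card_union_of_disjoint hST, Fintype.card_fin]
        omega
      have hz0mem : z0 ∈ S ∪ T := huniv ▸ Finset.mem_univ z0
      rw [Finset.mem_union] at hz0mem
      rcases hz0mem with hzS | hzT
      · obtain ⟨v, hv, hvne⟩ := Finset.exists_mem_ne (s := S) (by omega) z0
        have hedge : s(z0, v) ∈ G.edgeSet := by
          rw [mem_edgeSet, hadj]
          exact ⟨fun h => hvne h.symm, Or.inl rfl⟩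
        exact hne _ hedge (hSS z0 hzS v hv (fun h => hvne h.symm))
      · have hSne : S.Nonempty := Finset.card_pos.mp (by omega)
        obtain ⟨u, hu⟩ := hSne
        have hedge : s(u, z0) ∈ G.edgeSet := by
          rw [mem_edgeSet, hadj]
          refine ⟨fun h => ?_, Or.inr (Or.inl rfl)⟩
          exact Finset.disjoint_left.mp hST hu (h ▸ hzT)
        exact hne _ hedge (hSTc u hu z0 hzT)
    · -- k ≠ 0 : two distinct S-S edges with the same nonzero color
      have hSne : S.Nonempty := Finset.card_pos.mp (by omega)
      obtain ⟨u, hu⟩ := hSne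
      have h1 : 1 ≤ (S.erase u).card := by rw [Finset.card_erase_of_mem hu]; omega
      obtain ⟨v, hv⟩ := Finset.card_pos.mp (by omega : 0 < (S.erase u).card)
      have h2 : 0 < ((S.erase u).erase v).card := by
        rw [Finset.card_erase_of_mem hv, Finset.card_erase_of_mem hu]; omega
      obtain ⟨w, hw⟩ := Finset.card_pos.mp h2
      have hvS := Finset.mem_of_mem_erase hv
      have hwv : w ≠ v := Finset.ne_of_mem_erase hw
      have hwS := Finset.mem_of_mem_erase (Finset.mem_of_mem_erase hw)
      have hvu : v ≠ u := Finset.ne_of_mem_erase hv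
      have hwu : w ≠ u := Finset.ne_of_mem_erase (Finset.mem_of_mem_erase hw)
      have hcuv : c s(u, v) = k := hSS u hu v hvS (fun h => hvu h.symm)
      have hcuw : c s(u, w) = k := hSS u hu w hwS (fun h => hwu h.symm)
      have hmem : ∀ x : Fin n, x ≠ u → c s(u, x) = k → s(u, x) ∈ G.edgeSet := by
        intro x hx hcx
        by_contra hnot
        have hd : ¬ (s(u, x) : Sym2 (Fin n)).IsDiag := by
          rw [Sym2.isDiag_iff_proj_eq]; exact fun h => hx h.symm
        exact hk (hcx ▸ h0 _ hd hnot)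
      have he1 := hmem v hvu hcuv
      have he2 := hmem w hwu hcuw
      have := hinj he1 he2 (by rw [hcuv, hcuw])
      rcases Sym2.eq_iff.mp this with ⟨-, h⟩ | ⟨h1', h2'⟩
      · exact hwv h.symm
      · exact hwu (h1' ▸ h2' ▸ rfl)
end
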